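/- For a causal strategy σ on an arena A (a map of event structures ∂ : σ → A that is receptive and courteous), every immediate causal link m ⋗_σ n with n negative satisfies ∂(m) ⋗_A ∂(n); conversely, if m and n⁻ are compatible events of σ with ∂(m) ⋗_A ∂(n), then m ⋗_σ n. -/

import Mathlib

set_option autoImplicit false

/-- Immediate causality `a ⋗ b` for a relation `le`. -/
def immOf {α : Type} (le : α → α → Prop) (a b : α) : Prop :=
  le a b ∧ a ≠ b ∧ ∀ c, le a c → le c b → c = a ∨ c = b

/-- Configurations: finite, down-closed, consistent sets. -/
def ConfigOf {α : Type} (le conflict : α → α → Prop) (x : Set α) : Prop :=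
  x.Finite ∧ (∀ e ∈ x, ∀ e', le e' e → e' ∈ x) ∧ ∀ e ∈ x, ∀ e' ∈ x, ¬ conflict e e'

/-- Minimality for a causal dependency relation. -/
def MinimalOf {α : Type} (le : α → α → Prop) (a : α) : Prop := ∀ a', le a' a → a' = a

/-- An arena: an event structure with polarities (`true` = Player `+`,
`false` = Opponent `−`) which is alternating, forestial and race-free. -/
structure Arena (α : Type) where
  le : α → α → Prop
  conflict : α → α → Prop
  pol : α → Bool
  le_refl : ∀ e, le e e
  le_trans : ∀ {a b c : α}, le a b → le b c → le a c
  le_antisymm : ∀ {a b : α}, le a b → le b a → a = b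
  finite_causes : ∀ e : α, Set.Finite {e' | le e' e}
  conflict_irrefl : ∀ e, ¬ conflict e e
  conflict_symm : ∀ {a b : α}, conflict a b → conflict b a
  conflict_inherit : ∀ {a b b' : α}, conflict a b → le b b' → conflict a b'
  alternating : ∀ {a b : α}, immOf le a b → pol a ≠ pol b
  forestial : ∀ {a1 a2 a : α}, le a1 a → le a2 a → le a1 a2 ∨ le a2 a1
  race_free : ∀ {a1 a2 : α}, conflict a1 a2 →
    (∀ a1' a2', le a1' a1 → le a2' a2 → conflict a1' a2' → a1' = a1 ∧ a2' = a2) →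
    pol a1 = pol a2

/-- A causal strategy on an arena `A`: an event structure of strategy events with a
display map `dsp` to the arena which is a map of event structures (preserves
configurations, locally injective), is negative (minimal events display to
negative moves), courteous (immediate causal links with positive source or
negative target are sent to immediate causal links of `A`), and receptive (every
negative extension of the display of a configuration is witnessed by a unique
extension of the configuration). Polarities of strategy events are inherited
through `dsp`. -/
structure CausalStrategy {α : Type} (A : Arena α) (β : Type) where
  le : β → β → Prop
  conflict : β → β → Prop
  le_refl : ∀ e, le e e
  le_trans : ∀ {a b c : β}, le a b → le b c → le a c
  le_antisymm : ∀ {a b : β}, le a b → le b a → a = b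
  finite_causes : ∀ e : β, Set.Finite {e' | le e' e}
  conflict_irrefl : ∀ e, ¬ conflict e e
  conflict_symm : ∀ {a b : β}, conflict a b → conflict b a
  conflict_inherit : ∀ {a b b' : β}, conflict a b → le b b' → conflict a b'
  dsp : β → α
  dsp_config : ∀ x : Set β, ConfigOf le conflict x → ConfigOf A.le A.conflict (dsp '' x)
  dsp_locInj : ∀ x : Set β, ConfigOf le conflict x →
      ∀ e1 ∈ x, ∀ e2 ∈ x, dsp e1 = dsp e2 → e1 = e2
  negative : ∀ m : β, MinimalOf le m → A.pol (dsp m) = false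
  courteous : ∀ m n : β, immOf le m n →
      (A.pol (dsp m) = true ∨ A.pol (dsp n) = false) → immOf A.le (dsp m) (dsp n)
  receptive : ∀ x : Set β, ConfigOf le conflict x → ∀ a : α, A.pol a = false →
      a ∉ dsp '' x → ConfigOf A.le A.conflict (insert a (dsp '' x)) →
      ∃! m : β, m ∉ x ∧ ConfigOf le conflict (insert m x) ∧ dsp m = a

/-- In a finite nonempty set ordered by a partial order, there is a maximal element. -/
lemma exists_max_aux {β : Type} (le : β → β → Prop) (hrefl : ∀ e, le e e)
    (htrans : ∀ {a b c}, le a b → le b c → le a c)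
    (hanti : ∀ {a b}, le a b → le b a → a = b)
    (S : Set β) (hfin : S.Finite) (hne : S.Nonempty) :
    ∃ p ∈ S, ∀ d ∈ S, le p d → d = p := by
  letI : PartialOrder β :=
    { le := le
      lt := fun a b => le a b ∧ ¬ le b a
      le_refl := hrefl
      le_trans := fun _ _ _ => htrans
      lt_iff_le_not_ge := fun _ _ => Iff.rfl
      le_antisymm := fun _ _ => hanti }
  obtain ⟨p, hp, hmax⟩ := Set.Finite.exists_maximalFor id S hfin hne
  exact ⟨p, hp, fun d hd hpd => hanti (hmax hd hpd) hpd⟩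

/-- For a causal strategy `σ` on an arena `A`: every immediate causal link
`m ⋗_σ n` with `n` negative displays to an immediate causal link
`∂(m) ⋗_A ∂(n)`; conversely, if `m` and `n⁻` are compatible events of `σ`
(they lie in a common configuration) with `∂(m) ⋗_A ∂(n)`, then `m ⋗_σ n`. -/
theorem courtesy_and_its_converse {α β : Type} (A : Arena α) (S : CausalStrategy A β) :
    (∀ m n : β, immOf S.le m n → A.pol (S.dsp n) = false →
      immOf A.le (S.dsp m) (S.dsp n)) ∧
    (∀ m n : β, A.pol (S.dsp n) = false →
      (∃ x : Set β, ConfigOf S.le S.conflict x ∧ m ∈ x ∧ n ∈ x) →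
      immOf A.le (S.dsp m) (S.dsp n) → immOf S.le m n) := by
  constructor
  · intro m n h hneg
    exact S.courteous m n h (Or.inr hneg)
  · rintro m n hneg ⟨x, hx, hmx, hnx⟩ himm
    obtain ⟨hmn_le, hmn_ne, hmn_imm⟩ := himm
    -- The down-closure of `n` is a configuration contained in `x`.
    have hDnx : {e | S.le e n} ⊆ x := fun e he => hx.2.1 n hnx e he
    have hDncfg : ConfigOf S.le S.conflict {e | S.le e n} :=
      ⟨S.finite_causes n, fun e he e' h' => S.le_trans h' he,
        fun e he e' he' => hx.2.2 e (hDnx he) e' (hDnx he')⟩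
    -- `m ≤ n` in `σ`.
    have hmlen : S.le m n := by
      have himg := S.dsp_config _ hDncfg
      have hmem : S.dsp m ∈ S.dsp '' {e | S.le e n} :=
        himg.2.1 (S.dsp n) ⟨n, S.le_refl n, rfl⟩ (S.dsp m) hmn_le
      obtain ⟨e, he, hde⟩ := hmem
      have he' : e = m := S.dsp_locInj x hx e (hDnx he) m hmx hde
      exact he' ▸ he
    refine ⟨hmlen, ?_, ?_⟩
    · rintro rfl; exact hmn_ne rfl
    · intro c hmc hcn
      by_cases hc : c = n
      · exact Or.inr hc
      left
      -- Find a maximal `p` with `c ≤ p < n`.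
      have hTfin : Set.Finite {e | S.le c e ∧ S.le e n ∧ e ≠ n} :=
        (S.finite_causes n).subset (fun e he => he.2.1)
      have hTne : Set.Nonempty {e | S.le c e ∧ S.le e n ∧ e ≠ n} :=
        ⟨c, S.le_refl c, hcn, hc⟩
      obtain ⟨p, hpT, hpmax⟩ := exists_max_aux S.le S.le_refl
        (fun h1 h2 => S.le_trans h1 h2) (fun h1 h2 => S.le_antisymm h1 h2) _ hTfin hTne
      -- `p` is an immediate predecessor of `n` in `σ`.
      have hpimm : immOf S.le p n := by
        refine ⟨hpT.2.1, hpT.2.2, fun d hpd hdn => ?_⟩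
        by_cases hd : d = n
        · exact Or.inr hd
        · exact Or.inl (hpmax d ⟨S.le_trans hpT.1 hpd, hdn, hd⟩ hpd)
      -- Courtesy: `∂p ⋗ ∂n` in the arena.
      obtain ⟨hdpn_le, hdpn_ne, hdpn_imm⟩ := S.courteous p n hpimm (Or.inr hneg)
      -- Since the arena is forestial, `∂p = ∂m`.
      have hdpm : S.dsp p = S.dsp m := by
        rcases A.forestial hdpn_le hmn_le with h | h
        · rcases hdpn_imm (S.dsp m) h hmn_le with h' | h'
          · exact h'.symm
          · exact absurd h' hmn_ne
        · rcases hmn_imm (S.dsp p) h hdpn_le with h' | h'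
          · exact h'
          · exact absurd h' hdpn_ne
      -- Hence `p = m` by local injectivity on `x`.
      have hpx : p ∈ x := hx.2.1 n hnx p hpT.2.1
      have hpm : p = m := S.dsp_locInj x hx p hpx m hmx hdpm
      exact S.le_antisymm (hpm ▸ hpT.1 : S.le c m) hmc
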